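/- For every γ ∈ (0,2) there exists a constant C_γ such that for every Borel probability measure μ on the unit sphere S² ⊂ ℝ³ with barycenter zero, ∫_{S²} x dμ(x) = 0, one has 2γ ∬_{S²×S²} log(1/|x−y|) dμ(x) dμ(y) ≤ D(μ‖σ) + C_γ. (Strengthened logarithmic Hardy–Littlewood–Sobolev inequality on the two-sphere; without the barycenter constraint this holds only for γ ≤ 1.) -/

import Mathlib

open MeasureTheory
open scoped ENNReal Classical

/-- Euclidean three-space, containing the unit two-sphere. -/
abbrev E3 : Type := EuclideanSpace ℝ (Fin 3)

/-- The relative entropy (Kullback–Leibler divergence) `D(μ‖ν)`, equal to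
`∫ log(dμ/dν) dμ` when `μ ≪ ν` and this integral is defined, and `∞` otherwise. -/
noncomputable def relEnt {α : Type*} [MeasurableSpace α] (μ ν : Measure α) : ℝ≥0∞ :=
  if μ ≪ ν ∧ Integrable (fun x => Real.log (μ.rnDeriv ν x).toReal) μ then
    ENNReal.ofReal (∫ x, Real.log (μ.rnDeriv ν x).toReal ∂μ)
  else ∞

notation "S2" => Metric.sphere (0 : E3) 1

lemma ball_meas_eq (σ : Measure E3) (hσinv : ∀ R : E3 ≃ₗᵢ[ℝ] E3, σ.map R = σ)
    {p q : E3} (hp : ‖p‖ = ‖q‖) (r : ℝ) :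
    σ (Metric.ball p r) = σ (Metric.ball q r) := by
  set R : E3 ≃ₗᵢ[ℝ] E3 := Submodule.reflection (ℝ ∙ (p - q))ᗮ with hR
  have hpq : R p = q := Submodule.reflection_sub hp
  have hmeas : Measurable R := R.continuous.measurable
  have h1 : σ (Metric.ball q r) = σ (⇑R ⁻¹' Metric.ball q r) := by
    conv_lhs => rw [← hσinv R]
    rw [Measure.map_apply hmeas measurableSet_ball]
  have h2 : ⇑R ⁻¹' Metric.ball q r = Metric.ball p r := by
    have := R.toIsometryEquiv.preimage_ball q r
    simp only [LinearIsometryEquiv.coe_toIsometryEquiv] at this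
    rw [this]
    have h3 : R.symm q = p := by
      have : R.symm (R p) = R.symm q := by rw [hpq]
      simpa using this.symm
    show Metric.ball (R.symm q) r = _
    rw [h3]
  rw [h1, h2]

lemma nat_abs_sub_ge_one {j j' : ℕ} (h : j ≠ j') : (1:ℝ) ≤ |(j:ℝ) - (j':ℝ)| := by
  rcases lt_or_gt_of_ne h with hlt | hlt
  · have h1 : (j:ℝ) + 1 ≤ (j':ℝ) := by exact_mod_cast hlt
    rw [abs_sub_comm, abs_of_pos (by linarith)]
    linarith
  · have h1 : (j':ℝ) + 1 ≤ (j:ℝ) := by exact_mod_cast hlt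
    rw [abs_of_pos (by linarith)]
    linarith

set_option maxHeartbeats 1000000 in
lemma sigma_ball_le (σ : Measure E3) (hσ1 : IsProbabilityMeasure σ)
    (hσinv : ∀ R : E3 ≃ₗᵢ[ℝ] E3, σ.map R = σ)
    {p : E3} (hp : ‖p‖ = 1) {r : ℝ} (hr : 0 < r) :
    σ (Metric.ball p r) ≤ ENNReal.ofReal (256 * r ^ 2) := by
  rcases le_or_gt (1/8 : ℝ) r with h8 | h8
  · calc σ (Metric.ball p r) ≤ 1 := prob_le_one
    _ ≤ ENNReal.ofReal (256 * r ^ 2) := by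
        rw [ENNReal.one_le_ofReal]
        nlinarith
  -- main case
  set n : ℕ := ⌊1/(4*r)⌋₊ with hn
  have h4r : (0:ℝ) < 4*r := by linarith
  have hx2 : (2:ℝ) ≤ 1/(4*r) := by
    rw [le_div_iff₀ h4r]; linarith
  have hn2 : 2 ≤ n := Nat.le_floor (by exact_mod_cast hx2)
  have hnle : (n:ℝ) ≤ 1/(4*r) := Nat.floor_le (by positivity)
  have hnge : 1/(8*r) ≤ (n:ℝ) := by
    have h1 : 1/(4*r) < (n:ℝ) + 1 := Nat.lt_floor_add_one _
    have h2 : (2:ℝ) ≤ (n:ℝ) := by exact_mod_cast hn2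
    have : 1/(8*r) = (1/(4*r))/2 * 1 := by field_simp; ring
    nlinarith
  -- the grid points
  set pt : ℕ → ℕ → E3 := fun j k =>
    (WithLp.equiv 2 (Fin 3 → ℝ)).symm
      ![2*r*j, 2*r*k, Real.sqrt (1 - (2*r*j)^2 - (2*r*k)^2)] with hpt
  have hcoord : ∀ j k, ∀ i : Fin 3,
      (pt j k) i = ![2*r*j, 2*r*k, Real.sqrt (1 - (2*r*j)^2 - (2*r*k)^2)] i := by
    intro j k i; rfl
  have hbound : ∀ j : ℕ, j < n → (0:ℝ) ≤ 2*r*j ∧ 2*r*j ≤ 1/2 := by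
    intro j hj
    constructor
    · positivity
    · have : (j:ℝ) ≤ (n:ℝ) - 1 := by
        have : (j:ℝ) + 1 ≤ (n:ℝ) := by exact_mod_cast hj
        linarith
      have h3 : 2*r*(j:ℝ) ≤ 2*r*((n:ℝ)-1) := by nlinarith
      have h4 : 2*r*((n:ℝ)) ≤ 2*r*(1/(4*r)) := by nlinarith
      have : 2*r*(1/(4*r)) = 1/2 := by field_simp; ring
      nlinarith
  have hnorm : ∀ j k : ℕ, j < n → k < n → ‖pt j k‖ = 1 := by
    intro j k hj hk
    obtain ⟨ha0, ha1⟩ := hbound j hj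
    obtain ⟨hb0, hb1⟩ := hbound k hk
    have hsq : (0:ℝ) ≤ 1 - (2*r*j)^2 - (2*r*k)^2 := by nlinarith
    rw [EuclideanSpace.norm_eq]
    rw [Fin.sum_univ_three]
    simp only [hcoord]
    simp only [Matrix.cons_val_zero, Matrix.cons_val_one, Matrix.head_cons,
      Matrix.cons_val_two, Matrix.tail_cons]
    rw [Real.norm_eq_abs, Real.norm_eq_abs, Real.norm_eq_abs]
    rw [sq_abs, sq_abs, sq_abs, Real.sq_sqrt hsq]
    rw [show (2*r*j)^2 + (2*r*k)^2 + (1 - (2*r*j)^2 - (2*r*k)^2) = 1 by ring]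
    exact Real.sqrt_one
  have hdist : ∀ j k j' k' : ℕ, (j,k) ≠ (j',k') → 2*r ≤ dist (pt j k) (pt j' k') := by
    intro j k j' k' hne
    have key : ∀ i : Fin 3, |(pt j k) i - (pt j' k') i| ≤ dist (pt j k) (pt j' k') := by
      intro i
      rw [EuclideanSpace.dist_eq]
      have : |(pt j k) i - (pt j' k') i| = Real.sqrt (dist ((pt j k) i) ((pt j' k') i) ^ 2) := by
        rw [Real.dist_eq, Real.sqrt_sq_eq_abs, abs_abs]
      rw [this]
      apply Real.sqrt_le_sqrt
      exact Finset.single_le_sum (f := fun i => dist ((pt j k) i) ((pt j' k') i) ^ 2)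
        (fun i _ => sq_nonneg _) (Finset.mem_univ i)
    have hcases : j ≠ j' ∨ k ≠ k' := by
      by_contra hcon
      push_neg at hcon
      exact hne (by rw [hcon.1, hcon.2])
    rcases hcases with hjj | hkk
    · have hk0 := key 0
      simp only [hcoord, Matrix.cons_val_zero] at hk0
      have h1 : (1:ℝ) ≤ |(j:ℝ) - (j':ℝ)| := nat_abs_sub_ge_one hjj
      have : |2*r*(j:ℝ) - 2*r*(j':ℝ)| = 2*r*|(j:ℝ) - (j':ℝ)| := by
        rw [← mul_sub, abs_mul, abs_of_pos (by linarith : (0:ℝ) < 2*r)]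
      nlinarith [abs_nonneg ((j:ℝ) - (j':ℝ))]
    · have hk1 := key 1
      simp only [hcoord, Matrix.cons_val_one, Matrix.head_cons, Matrix.cons_val_zero] at hk1
      have h1 : (1:ℝ) ≤ |(k:ℝ) - (k':ℝ)| := nat_abs_sub_ge_one hkk
      have : |2*r*(k:ℝ) - 2*r*(k':ℝ)| = 2*r*|(k:ℝ) - (k':ℝ)| := by
        rw [← mul_sub, abs_mul, abs_of_pos (by linarith : (0:ℝ) < 2*r)]
      nlinarith [abs_nonneg ((k:ℝ) - (k':ℝ))]
  -- pairwise disjoint balls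
  set F : Finset (ℕ × ℕ) := Finset.range n ×ˢ Finset.range n with hF
  have hdisj : (F : Set (ℕ × ℕ)).PairwiseDisjoint (fun jk => Metric.ball (pt jk.1 jk.2) r) := by
    intro a _ b _ hab
    apply Metric.ball_disjoint_ball
    have := hdist a.1 a.2 b.1 b.2 (by simpa using hab)
    linarith
  have hsum : ∑ jk ∈ F, σ (Metric.ball (pt jk.1 jk.2) r) ≤ 1 := by
    rw [← measure_biUnion_finset hdisj (fun b _ => measurableSet_ball)]
    exact prob_le_one
  have heach : ∀ jk ∈ F, σ (Metric.ball (pt jk.1 jk.2) r) = σ (Metric.ball p r) := by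
    intro jk hjk
    simp only [hF, Finset.mem_product, Finset.mem_range] at hjk
    exact ball_meas_eq σ hσinv (by rw [hnorm jk.1 jk.2 hjk.1 hjk.2, hp]) r
  have hcard : F.card = n^2 := by simp [hF, sq]
  have hsum2 : (n^2 : ℝ≥0∞) * σ (Metric.ball p r) ≤ 1 := by
    calc (n^2 : ℝ≥0∞) * σ (Metric.ball p r) = ∑ jk ∈ F, σ (Metric.ball p r) := by
          rw [Finset.sum_const, hcard]; simp [mul_comm]
    _ = ∑ jk ∈ F, σ (Metric.ball (pt jk.1 jk.2) r) := (Finset.sum_congr rfl heach).symm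
    _ ≤ 1 := hsum
  have hnn : (0:ℝ) < (n:ℝ)^2 := by positivity
  have hfin : σ (Metric.ball p r) ≤ ((n:ℝ≥0∞)^2)⁻¹ := by
    rw [ENNReal.le_inv_iff_mul_le]
    calc σ (Metric.ball p r) * (n:ℝ≥0∞)^2 = (n^2 : ℝ≥0∞) * σ (Metric.ball p r) := by
          push_cast; ring
    _ ≤ 1 := hsum2
  refine hfin.trans ?_
  have h1 : ((n:ℝ≥0∞)^2)⁻¹ = ENNReal.ofReal (((n:ℝ)^2)⁻¹) := by
    rw [ENNReal.ofReal_inv_of_pos hnn]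
    congr 1
    rw [ENNReal.ofReal_pow (by positivity)]
    congr 1
    exact (ENNReal.ofReal_natCast n).symm
  rw [h1]
  apply ENNReal.ofReal_le_ofReal
  rw [inv_le_iff_one_le_mul₀ (by positivity)]
  have : 1/(8*r) * (1/(8*r)) ≤ (n:ℝ) * (n:ℝ) := by
    apply mul_le_mul hnge hnge (by positivity) (by positivity)
  have hq : 1/(8*r) * (1/(8*r)) = 1/(64*r^2) := by
    field_simp; ring
  have h64 : (0:ℝ) < 64 * r^2 := by positivity
  rw [hq] at this
  have : (1:ℝ) ≤ 64*r^2 * ((n:ℝ)*(n:ℝ)) := by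
    rw [div_le_iff₀ h64] at this
    nlinarith
  nlinarith [sq_nonneg ((n:ℝ))]

lemma meas_null_compl (μ : Measure E3) (hs : μ S2 = 1) (h1 : IsProbabilityMeasure μ) :
    μ (S2ᶜ) = 0 := by
  rw [measure_compl Metric.isClosed_sphere.measurableSet (by simp), hs, measure_univ, tsub_self]

lemma sigma_singleton_null (σ : Measure E3) (hσ1 : IsProbabilityMeasure σ)
    (hσinv : ∀ R : E3 ≃ₗᵢ[ℝ] E3, σ.map R = σ)
    (hball : ∀ p : E3, ‖p‖ = 1 → ∀ r : ℝ, 0 < r → σ (Metric.ball p r) ≤ ENNReal.ofReal (256 * r ^ 2))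
    {p : E3} (hp : ‖p‖ = 1) : σ {p} = 0 := by
  refine le_antisymm ?_ (zero_le)
  refine ENNReal.le_of_forall_pos_le_add (fun ε hε _ => ?_)
  have hr : (0:ℝ) < Real.sqrt ((ε:ℝ)/256) := by
    apply Real.sqrt_pos.mpr; positivity
  calc σ {p} ≤ σ (Metric.ball p (Real.sqrt ((ε:ℝ)/256))) := by
        apply measure_mono; intro x hx; simp at hx; subst hx
        exact Metric.mem_ball_self hr
  _ ≤ ENNReal.ofReal (256 * Real.sqrt ((ε:ℝ)/256) ^ 2) := hball p hp _ hr
  _ ≤ 0 + ε := by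
      rw [Real.sq_sqrt (by positivity)]
      rw [zero_add]
      rw [show (256:ℝ) * ((ε:ℝ)/256) = (ε:ℝ) by ring]
      simp [ENNReal.ofReal_coe_nnreal]

set_option maxHeartbeats 1000000 in
lemma kernel_bound (σ : Measure E3) (hσ1 : IsProbabilityMeasure σ)
    (hσs : σ S2 = 1)
    (hball : ∀ p : E3, ‖p‖ = 1 → ∀ r : ℝ, 0 < r → σ (Metric.ball p r) ≤ ENNReal.ofReal (256 * r ^ 2))
    (hsing : ∀ p : E3, ‖p‖ = 1 → σ {p} = 0)
    {γ' : ℝ} (hg1 : 1 < γ') (hg2 : γ' < 2) :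
    ∃ C' : ℝ≥0∞, C' ≠ ⊤ ∧ ∀ y : E3, ‖y‖ = 1 →
      (∫⁻ x, ENNReal.ofReal ((2 / dist x y) ^ γ') ∂σ) ≤ C' := by
  set b : ℝ := (2:ℝ) ^ γ' with hb
  have hb0 : 0 < b := Real.rpow_pos_of_pos (by norm_num) _
  have hb4 : b < 4 := by
    have : (2:ℝ) ^ γ' < (2:ℝ) ^ (2:ℝ) :=
      Real.rpow_lt_rpow_of_exponent_lt (by norm_num) hg2
    simpa [show ((2:ℝ):ℝ) ^ (2:ℝ) = 4 by
      rw [show (2:ℝ) = ((2:ℕ):ℝ) by norm_num, Real.rpow_natCast]; norm_num] using this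
  set q : ℝ≥0∞ := ENNReal.ofReal (b / 4) with hq
  have hq1 : q < 1 := by
    rw [hq, ← ENNReal.ofReal_one]
    exact ENNReal.ofReal_lt_ofReal_iff_of_nonneg (by positivity) |>.mpr (by linarith)
  refine ⟨ENNReal.ofReal (4096 * b) * (1 - q)⁻¹, ?_, ?_⟩
  · apply ENNReal.mul_ne_top ENNReal.ofReal_ne_top
    rw [Ne, ENNReal.inv_eq_top]
    exact (tsub_pos_of_lt hq1).ne'
  intro y hy
  -- annuli
  set A : ℕ → Set E3 := fun k =>
    Metric.closedBall y (2 * (2:ℝ)⁻¹ ^ k) \ Metric.closedBall y (2 * (2:ℝ)⁻¹ ^ (k+1)) with hA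
  have hAm : ∀ k, MeasurableSet (A k) :=
    fun k => Metric.isClosed_closedBall.measurableSet.diff Metric.isClosed_closedBall.measurableSet
  -- step 1 : pointwise bound a.e.
  have hae : ∀ᵐ x ∂σ, ENNReal.ofReal ((2 / dist x y) ^ γ') ≤
      ∑' k : ℕ, (A k).indicator (fun _ => ENNReal.ofReal (b ^ (k+1))) x := by
    have h1 : ∀ᵐ x ∂σ, ‖x‖ = 1 := by
      rw [ae_iff]
      have : {a : E3 | ¬‖a‖ = 1} = (S2)ᶜ := by
        ext a; simp [mem_sphere_zero_iff_norm]
      rw [this]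
      exact meas_null_compl σ hσs hσ1
    have h2 : ∀ᵐ x ∂σ, x ≠ y := by
      rw [ae_iff]
      simpa using hsing y hy
    filter_upwards [h1, h2] with x hx1 hxy
    have hd0 : 0 < dist x y := dist_pos.mpr hxy
    have hd2 : dist x y ≤ 2 := by
      rw [dist_eq_norm]
      calc ‖x - y‖ ≤ ‖x‖ + ‖y‖ := norm_sub_le _ _
      _ = 2 := by rw [hx1, hy]; norm_num
    -- find k
    have hP : ∃ k : ℕ, 2 * (2:ℝ)⁻¹ ^ (k+1) < dist x y := by
      obtain ⟨m, hm⟩ := exists_pow_lt_of_lt_one (by positivity : (0:ℝ) < dist x y / 2)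
        (by norm_num : (2:ℝ)⁻¹ < 1)
      exact ⟨m, by
        have : (2:ℝ)⁻¹ ^ (m+1) ≤ (2:ℝ)⁻¹ ^ m := by
          apply pow_le_pow_of_le_one (by norm_num) (by norm_num)
          omega
        nlinarith⟩
    set k := Nat.find hP with hk
    have hklt : 2 * (2:ℝ)⁻¹ ^ (k+1) < dist x y := Nat.find_spec hP
    have hkge : dist x y ≤ 2 * (2:ℝ)⁻¹ ^ k := by
      rcases Nat.eq_zero_or_pos k with h0 | hpos
      · rw [h0]; simpa using hd2
      · have := Nat.find_min hP (m := k - 1) (by omega)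
        push_neg at this
        have hk1 : k - 1 + 1 = k := by omega
        rwa [hk1] at this
    have hmem : x ∈ A k := by
      constructor
      · exact Metric.mem_closedBall.mpr hkge
      · intro hcon
        exact absurd (Metric.mem_closedBall.mp hcon) (not_le.mpr hklt)
    -- value bound
    have hval : (2 / dist x y) ^ γ' ≤ b ^ (k+1) := by
      have h2d : 2 / dist x y ≤ 2 ^ (k+1) := by
        rw [div_le_iff₀ hd0]
        have hpow : (0:ℝ) < (2:ℝ)⁻¹ ^ (k+1) := by positivity
        have : 2 * (2:ℝ)⁻¹ ^ (k+1) * 2 ^ (k+1) = 2 := by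
          rw [mul_assoc, inv_pow, inv_mul_cancel₀ (by positivity)]
          norm_num
        nlinarith
      calc (2 / dist x y) ^ γ' ≤ ((2:ℝ) ^ (k+1)) ^ γ' := by
            apply Real.rpow_le_rpow (by positivity) h2d (by linarith)
      _ = b ^ (k+1) := by
          rw [hb, ← Real.rpow_natCast ((2:ℝ) ^ γ') (k+1), ← Real.rpow_natCast (2:ℝ) (k+1),
            ← Real.rpow_mul (by norm_num), ← Real.rpow_mul (by norm_num), mul_comm]
    calc ENNReal.ofReal ((2 / dist x y) ^ γ') ≤ ENNReal.ofReal (b ^ (k+1)) :=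
          ENNReal.ofReal_le_ofReal hval
    _ = (A k).indicator (fun _ => ENNReal.ofReal (b ^ (k+1))) x := by
          rw [Set.indicator_of_mem hmem]
    _ ≤ ∑' k : ℕ, (A k).indicator (fun _ => ENNReal.ofReal (b ^ (k+1))) x := ENNReal.le_tsum k
  calc (∫⁻ x, ENNReal.ofReal ((2 / dist x y) ^ γ') ∂σ)
      ≤ ∫⁻ x, ∑' k : ℕ, (A k).indicator (fun _ => ENNReal.ofReal (b ^ (k+1))) x ∂σ :=
        lintegral_mono_ae hae
  _ = ∑' k : ℕ, ∫⁻ x, (A k).indicator (fun _ => ENNReal.ofReal (b ^ (k+1))) x ∂σ :=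
        lintegral_tsum (fun k => ((measurable_const).indicator (hAm k)).aemeasurable)
  _ = ∑' k : ℕ, ENNReal.ofReal (b ^ (k+1)) * σ (A k) := by
        congr 1; funext k
        rw [lintegral_indicator (hAm k), setLIntegral_const]
  _ ≤ ∑' k : ℕ, ENNReal.ofReal (4096 * b) * q ^ k := by
        apply ENNReal.tsum_le_tsum
        intro k
        have hsub : A k ⊆ Metric.ball y (4 * (2:ℝ)⁻¹ ^ k) := by
          intro x hx
          have := Metric.mem_closedBall.mp hx.1
          have hpow : (0:ℝ) < (2:ℝ)⁻¹ ^ k := by positivity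
          exact Metric.mem_ball.mpr (by nlinarith)
        have hballk : σ (A k) ≤ ENNReal.ofReal (256 * (4 * (2:ℝ)⁻¹ ^ k) ^ 2) :=
          le_trans (measure_mono hsub) (hball y hy _ (by positivity))
        calc ENNReal.ofReal (b ^ (k+1)) * σ (A k)
            ≤ ENNReal.ofReal (b ^ (k+1)) * ENNReal.ofReal (256 * (4 * (2:ℝ)⁻¹ ^ k) ^ 2) :=
              mul_le_mul_right hballk _
        _ = ENNReal.ofReal (b ^ (k+1) * (256 * (4 * (2:ℝ)⁻¹ ^ k) ^ 2)) :=
              (ENNReal.ofReal_mul (by positivity)).symm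
        _ = ENNReal.ofReal (4096 * b * (b/4) ^ k) := by
              congr 1
              have e1 : ((2:ℝ)⁻¹ ^ k) ^ 2 = (4:ℝ)⁻¹ ^ k := by
                rw [← pow_mul, mul_comm k 2, pow_mul]; norm_num
              rw [mul_pow, e1, pow_succ, div_pow, inv_pow]
              have h4k : (0:ℝ) < 4 ^ k := by positivity
              field_simp
              ring
        _ = ENNReal.ofReal (4096 * b) * q ^ k := by
              rw [ENNReal.ofReal_mul (by positivity), ← ENNReal.ofReal_pow (by positivity)]
  _ = ENNReal.ofReal (4096 * b) * ∑' k : ℕ, q ^ k := ENNReal.tsum_mul_left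
  _ = ENNReal.ofReal (4096 * b) * (1 - q)⁻¹ := by rw [ENNReal.tsum_geometric]

lemma ae_norm_one (μ : Measure E3) (hs : μ S2 = 1) (h1 : IsProbabilityMeasure μ) :
    ∀ᵐ y ∂μ, ‖y‖ = 1 := by
  rw [ae_iff]
  have : {a : E3 | ¬‖a‖ = 1} = (S2)ᶜ := by
    ext a; simp [mem_sphere_zero_iff_norm]
  rw [this]
  exact meas_null_compl μ hs h1

lemma concentration (μ : Measure E3) (hμ1 : IsProbabilityMeasure μ) (hμs : μ S2 = 1)
    (hbc : (∫ y, y ∂μ) = 0) {x : E3} (hx : ‖x‖ = 1) {δ : ℝ} (hδ0 : 0 < δ) (hδ1 : δ ≤ 1) :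
    (μ (Metric.ball x δ)).toReal ≤ 1 / (2 - δ^2/2) := by
  have haeS := ae_norm_one μ hμs hμ1
  have hid : Integrable (fun y : E3 => y) μ := by
    refine Integrable.mono' (integrable_const (1:ℝ)) aestronglyMeasurable_id ?_
    filter_upwards [haeS] with y hy
    simp [hy]
  have hinner_int : Integrable (fun y : E3 => (inner ℝ x y : ℝ)) μ := by
    refine Integrable.mono' (integrable_const (1:ℝ))
      ((continuous_const.inner continuous_id).aestronglyMeasurable) ?_
    filter_upwards [haeS] with y hy
    calc ‖(inner ℝ x y : ℝ)‖ = |(inner ℝ x y : ℝ)| := rfl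
    _ ≤ ‖x‖ * ‖y‖ := abs_real_inner_le_norm x y
    _ = 1 := by rw [hx, hy]; ring
  have hinner : ∫ y, (1 - (inner ℝ x y : ℝ)) ∂μ = 1 := by
    rw [integral_sub (integrable_const 1) hinner_int]
    rw [integral_inner hid x, hbc, inner_zero_right, integral_const, probReal_univ]
    simp
  set B := Metric.ball x δ with hB
  set c : ℝ := 2 - δ^2/2 with hc
  have hc0 : (0:ℝ) < c := by rw [hc]; nlinarith
  have hGint : Integrable (fun y => 2 - c * B.indicator (fun _ => (1:ℝ)) y) μ := by
    apply (integrable_const (2:ℝ)).sub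
    exact ((integrable_const (1:ℝ)).indicator measurableSet_ball).const_mul c
  have hFG : ∀ᵐ y ∂μ, (1 - (inner ℝ x y : ℝ)) ≤ 2 - c * B.indicator (fun _ => (1:ℝ)) y := by
    filter_upwards [haeS] with y hy
    have hsq : ‖x - y‖^2 = 2 - 2 * (inner ℝ x y : ℝ) := by
      rw [@norm_sub_sq_real E3, hx, hy]; ring
    by_cases hyB : y ∈ B
    · have hd : ‖x - y‖ < δ := by
        rw [← dist_eq_norm]
        exact Metric.mem_ball'.mp hyB
      have : 1 - (inner ℝ x y : ℝ) = ‖x - y‖^2 / 2 := by rw [hsq]; ring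
      rw [this, Set.indicator_of_mem hyB]
      have : ‖x - y‖^2 ≤ δ^2 := by nlinarith [norm_nonneg (x - y)]
      rw [hc]; nlinarith
    · rw [Set.indicator_of_notMem hyB]
      have hd : ‖x - y‖ ≤ 2 := by
        calc ‖x - y‖ ≤ ‖x‖ + ‖y‖ := norm_sub_le _ _
        _ = 2 := by rw [hx, hy]; ring
      have h4 : ‖x - y‖^2 ≤ 4 := by nlinarith [norm_nonneg (x - y)]
      nlinarith [hsq, h4]
  have hFint : Integrable (fun y : E3 => 1 - (inner ℝ x y : ℝ)) μ := (integrable_const 1).sub hinner_int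
  have hint : (1:ℝ) ≤ 2 - c * (μ B).toReal := by
    have := integral_mono_ae hFint hGint hFG
    rw [hinner] at this
    rwa [integral_sub (integrable_const 2)
        (((integrable_const (1:ℝ)).indicator measurableSet_ball).const_mul c),
      integral_const, probReal_univ, integral_const_mul, integral_indicator_const _ measurableSet_ball,
      one_smul, smul_eq_mul, mul_one] at this
  rw [le_div_iff₀ hc0]
  nlinarith

noncomputable def eexp (t : ℝ≥0∞) : ℝ≥0∞ :=
  if t = ⊤ then ⊤ else ENNReal.ofReal (Real.exp t.toReal)

lemma eexp_top : eexp ⊤ = ⊤ := if_pos rfl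

lemma eexp_ne_zero (t : ℝ≥0∞) : eexp t ≠ 0 := by
  rw [eexp]
  split
  · exact ENNReal.top_ne_zero
  · simp [Real.exp_pos]

lemma eexp_mono {s t : ℝ≥0∞} (h : s ≤ t) : eexp s ≤ eexp t := by
  rw [eexp, eexp]
  rcases eq_or_ne t ⊤ with ht | ht
  · simp [ht]
  · have hs : s ≠ ⊤ := fun hs => ht (top_le_iff.mp (hs ▸ h))
    rw [if_neg ht, if_neg hs]
    exact ENNReal.ofReal_le_ofReal (Real.exp_le_exp.mpr (ENNReal.toReal_mono ht h))

lemma eexp_add (s t : ℝ≥0∞) : eexp (s + t) = eexp s * eexp t := by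
  rcases eq_or_ne s ⊤ with hs | hs
  · rw [hs, eexp_top, top_add, eexp_top, ENNReal.top_mul (eexp_ne_zero t)]
  rcases eq_or_ne t ⊤ with ht | ht
  · rw [ht, eexp_top, add_top, eexp_top, ENNReal.mul_top (eexp_ne_zero s)]
  rw [eexp, eexp, eexp, if_neg hs, if_neg ht, if_neg (by simp [ENNReal.add_eq_top, hs, ht])]
  rw [ENNReal.toReal_add hs ht, Real.exp_add, ENNReal.ofReal_mul (Real.exp_nonneg _)]

lemma eexp_ofReal {a : ℝ} (ha : 0 ≤ a) : eexp (ENNReal.ofReal a) = ENNReal.ofReal (Real.exp a) := by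
  rw [eexp, if_neg ENNReal.ofReal_ne_top, ENNReal.toReal_ofReal ha]

lemma le_eexp (t : ℝ≥0∞) : t ≤ eexp t := by
  rcases eq_or_ne t ⊤ with ht | ht
  · rw [ht, eexp_top]
  · rw [eexp, if_neg ht]
    conv_lhs => rw [← ENNReal.ofReal_toReal ht]
    apply ENNReal.ofReal_le_ofReal
    linarith [Real.add_one_le_exp t.toReal]

section Chain

variable (μ : Measure E3) [IsProbabilityMeasure μ]

set_option maxHeartbeats 2000000 in
lemma chain (hμs : μ S2 = 1) {x : E3} (hx : ‖x‖ = 1) (hxnull : μ {x} = 0)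
    {γ γ' δ : ℝ} (hγ0 : 0 < γ) (hg1 : 1 < γ') (hg2 : γ' < 2)
    (hδ0 : 0 < δ) (hδ1 : δ ≤ 1)
    (hcap : (μ (Metric.ball x δ)).toReal ≤ γ' / (2*γ)) :
    eexp (ENNReal.ofReal (2*γ) * ∫⁻ y, ENNReal.ofReal (Real.log 2 - Real.log (dist x y)) ∂μ)
      ≤ ENNReal.ofReal ((2/δ) ^ (2*γ)) *
        (1 + ENNReal.ofReal (2*γ/γ') * ∫⁻ y, ENNReal.ofReal ((2 / dist x y) ^ γ') ∂μ) := by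
  have haeS : ∀ᵐ y ∂μ, ‖y‖ = 1 := by
    rw [ae_iff]
    have : {a : E3 | ¬‖a‖ = 1} = (S2)ᶜ := by
      ext a; simp [mem_sphere_zero_iff_norm]
    rw [this, measure_compl Metric.isClosed_sphere.measurableSet (by simp), hμs, measure_univ,
      tsub_self]
  have haex : ∀ᵐ y ∂μ, y ≠ x := by
    rw [ae_iff]
    simpa using hxnull
  set w : E3 → ℝ := fun y => Real.log 2 - Real.log (dist x y) with hw
  have hwm : Measurable fun y => ENNReal.ofReal (w y) := by
    apply Measurable.ennreal_ofReal
    exact measurable_const.sub (Real.measurable_log.comp (measurable_const.dist measurable_id))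
  have hrm : Measurable fun y => ENNReal.ofReal ((2 / dist x y) ^ γ') := by
    apply Measurable.ennreal_ofReal
    apply Measurable.pow
    · exact measurable_const.div (measurable_const.dist measurable_id)
    · exact measurable_const
  have hd2 : ∀ y : E3, ‖y‖ = 1 → dist x y ≤ 2 := by
    intro y hy
    rw [dist_eq_norm]
    calc ‖x - y‖ ≤ ‖x‖ + ‖y‖ := norm_sub_le _ _
    _ = 2 := by rw [hx, hy]; ring
  set B := Metric.ball x δ with hB
  set Φ := ∫⁻ y, ENNReal.ofReal (w y) ∂μ with hΦ
  set M := ∫⁻ y in B, ENNReal.ofReal (w y) ∂μ with hM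
  set Ψ := ∫⁻ y, ENNReal.ofReal ((2 / dist x y) ^ γ') ∂μ with hΨ
  have hg0' : (0:ℝ) < 2*γ := by linarith
  have hγ'0 : (0:ℝ) < γ' := by linarith
  have h2δ : (1:ℝ) ≤ 2/δ := by rw [le_div_iff₀ hδ0]; linarith
  have hlogδ : 0 ≤ Real.log (2/δ) := Real.log_nonneg h2δ
  have hlog2δ : Real.log 2 - Real.log δ = Real.log (2/δ) :=
    (Real.log_div two_ne_zero (ne_of_gt hδ0)).symm
  -- Step a : Φ ≤ M + log(2/δ)
  have hstepa : Φ ≤ M + ENNReal.ofReal (Real.log (2/δ)) := by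
    have hpt : ∀ y : E3, ENNReal.ofReal (w y) ≤
        B.indicator (fun y => ENNReal.ofReal (w y)) y + ENNReal.ofReal (Real.log (2/δ)) := by
      intro y
      by_cases hyB : y ∈ B
      · rw [Set.indicator_of_mem hyB]; exact le_self_add
      · rw [Set.indicator_of_notMem hyB, zero_add]
        apply ENNReal.ofReal_le_ofReal
        have hd : δ ≤ dist x y := by
          rw [hB, Metric.mem_ball, not_lt, dist_comm] at hyB
          exact hyB
        rw [hw, ← hlog2δ]
        simp only []
        have := Real.log_le_log hδ0 hd
        linarith
    calc Φ ≤ ∫⁻ y, (B.indicator (fun y => ENNReal.ofReal (w y)) y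
          + ENNReal.ofReal (Real.log (2/δ))) ∂μ := lintegral_mono hpt
    _ = M + ENNReal.ofReal (Real.log (2/δ)) := by
        rw [lintegral_add_right _ measurable_const, lintegral_indicator measurableSet_ball,
          lintegral_const, measure_univ, mul_one]
  -- reduction when Ψ = ⊤
  have hgoal_top : Ψ = ⊤ →
      eexp (ENNReal.ofReal (2*γ) * Φ) ≤ ENNReal.ofReal ((2/δ) ^ (2*γ)) *
        (1 + ENNReal.ofReal (2*γ/γ') * Ψ) := by
    intro htop
    have h1 : ENNReal.ofReal (2*γ/γ') ≠ 0 := by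
      simp only [Ne, ENNReal.ofReal_eq_zero, not_le]; positivity
    have h2 : ENNReal.ofReal ((2/δ) ^ (2*γ)) ≠ 0 := by
      simp only [Ne, ENNReal.ofReal_eq_zero, not_le]; positivity
    rw [htop, ENNReal.mul_top h1, add_top, ENNReal.mul_top h2]
    exact le_top
  -- pointwise exp comparison on B (used twice)
  have hptexp : ∀ᵐ y ∂(μ.restrict B), ENNReal.ofReal γ' * ENNReal.ofReal (w y)
      ≤ ENNReal.ofReal ((2 / dist x y) ^ γ') := by
    filter_upwards [ae_restrict_of_ae haeS, ae_restrict_of_ae haex] with y hy hyx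
    have hdp : 0 < dist x y := dist_pos.mpr (Ne.symm hyx)
    have hlog : w y = Real.log (2 / dist x y) := by
      rw [hw]; simp only []
      rw [Real.log_div two_ne_zero (ne_of_gt hdp)]
    have hrw : (2 / dist x y) ^ γ' = Real.exp (γ' * Real.log (2 / dist x y)) := by
      rw [Real.rpow_def_of_pos (by positivity), mul_comm]
    rw [← ENNReal.ofReal_mul (le_of_lt hγ'0)]
    apply ENNReal.ofReal_le_ofReal
    rw [hlog, hrw]
    have := Real.add_one_le_exp (γ' * Real.log (2 / dist x y))
    linarith
  -- case M = ⊤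
  rcases eq_or_ne M ⊤ with hMtop | hMfin
  · apply hgoal_top
    have h1 : ENNReal.ofReal γ' * M ≤ ∫⁻ y in B, ENNReal.ofReal ((2 / dist x y) ^ γ') ∂μ := by
      rw [hM, ← lintegral_const_mul _ hwm]
      exact lintegral_mono_ae hptexp
    rw [hMtop, ENNReal.mul_top (by simp only [Ne, ENNReal.ofReal_eq_zero, not_le]; linarith)] at h1
    have h2 : (∫⁻ y in B, ENNReal.ofReal ((2 / dist x y) ^ γ') ∂μ) ≤ Ψ :=
      lintegral_mono' Measure.restrict_le_self (le_refl _)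
    exact top_le_iff.mp ((top_le_iff.mp h1) ▸ h2)
  -- main case : M finite
  have hwBpos : ∀ y ∈ B, 0 ≤ w y := by
    intro y hy
    have hdlt : dist x y < δ := by rw [hB, Metric.mem_ball, dist_comm] at hy; exact hy
    have hlog2 : 0 ≤ Real.log 2 := Real.log_nonneg one_le_two
    rcases eq_or_lt_of_le (dist_nonneg : (0:ℝ) ≤ dist x y) with h0 | h0
    · rw [hw]; simp only [← h0, Real.log_zero]; linarith
    · have : Real.log (dist x y) ≤ 0 := Real.log_nonpos (le_of_lt h0) (by linarith)
      rw [hw]; simp only []; linarith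
  have hIntB : IntegrableOn w B μ := by
    have h1 : Integrable (fun y => (ENNReal.ofReal (w y)).toReal) (μ.restrict B) :=
      integrable_toReal_of_lintegral_ne_top hwm.aemeasurable (by rw [← hM]; exact hMfin)
    apply h1.congr
    filter_upwards [ae_restrict_mem measurableSet_ball] with y hy
    exact ENNReal.toReal_ofReal (hwBpos y hy)
  set I := ∫ y in B, w y ∂μ with hI
  have hI0 : 0 ≤ I := setIntegral_nonneg measurableSet_ball hwBpos
  have hMI : M = ENNReal.ofReal I := by
    rw [hM, hI, ofReal_integral_eq_lintegral_ofReal hIntB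
      ((ae_restrict_mem measurableSet_ball).mono hwBpos)]
  -- split on J'
  rcases eq_or_ne (∫⁻ y in B, ENNReal.ofReal ((2 / dist x y) ^ γ') ∂μ) ⊤ with hJtop | hJfin
  · apply hgoal_top
    have h2 : (∫⁻ y in B, ENNReal.ofReal ((2 / dist x y) ^ γ') ∂μ) ≤ Ψ :=
      lintegral_mono' Measure.restrict_le_self (le_refl _)
    exact top_le_iff.mp (hJtop ▸ h2)
  have hIntJB : IntegrableOn (fun y => (2 / dist x y) ^ γ') B μ := by
    have h1 : Integrable (fun y => (ENNReal.ofReal ((2 / dist x y) ^ γ')).toReal)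
        (μ.restrict B) := integrable_toReal_of_lintegral_ne_top hrm.aemeasurable hJfin
    apply h1.congr
    filter_upwards [] with y
    exact ENNReal.toReal_ofReal (Real.rpow_nonneg (by positivity) _)
  set J := ∫ y in B, (2 / dist x y) ^ γ' ∂μ with hJ
  have hJof : (∫⁻ y in B, ENNReal.ofReal ((2 / dist x y) ^ γ') ∂μ) = ENNReal.ofReal J := by
    rw [hJ, ofReal_integral_eq_lintegral_ofReal hIntJB
      (Filter.Eventually.of_forall (fun y => Real.rpow_nonneg (by positivity) _))]
  -- real-variable work
  set q' := (μ B).toReal with hq'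
  have hq'0 : 0 ≤ q' := ENNReal.toReal_nonneg
  set θ := γ'/(2*γ) with hθ
  have hθpos : 0 < θ := by rw [hθ]; positivity
  set β := 1 - q'/θ with hβ
  have hβ0 : 0 ≤ β := by
    have : q'/θ ≤ 1 := by rw [div_le_one hθpos]; exact hcap
    rw [hβ]; linarith
  have hβ1 : β ≤ 1 := by
    have : 0 ≤ q'/θ := by positivity
    rw [hβ]; linarith
  set m₀ := 2*γ*I with hm₀
  have hA1 : Real.exp m₀ * ((1 - m₀) * q' + γ' * I) ≤ J := by
    have hint1 : IntegrableOn (fun y => Real.exp m₀ * (1 + γ' * w y - m₀)) B μ := by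
      apply Integrable.const_mul
      exact ((integrable_const (1:ℝ)).add (hIntB.const_mul γ')).sub (integrable_const m₀)
    have hpt : ∀ᵐ y ∂(μ.restrict B),
        Real.exp m₀ * (1 + γ' * w y - m₀) ≤ (2 / dist x y) ^ γ' := by
      filter_upwards [ae_restrict_of_ae haeS, ae_restrict_of_ae haex] with y hy hyx
      have hdp : 0 < dist x y := dist_pos.mpr (Ne.symm hyx)
      have hlog : w y = Real.log (2 / dist x y) := by
        rw [hw]; simp only []
        rw [Real.log_div two_ne_zero (ne_of_gt hdp)]
      have hrw : (2 / dist x y) ^ γ' = Real.exp (γ' * Real.log (2 / dist x y)) := by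
        rw [Real.rpow_def_of_pos (by positivity), mul_comm]
      rw [hlog, hrw]
      have h1 := Real.add_one_le_exp (γ' * Real.log (2 / dist x y) - m₀)
      have h2 : Real.exp (γ' * Real.log (2 / dist x y))
          = Real.exp m₀ * Real.exp (γ' * Real.log (2 / dist x y) - m₀) := by
        rw [← Real.exp_add]; ring_nf
      rw [h2]
      have h3 := Real.exp_pos m₀
      nlinarith
    have hmono := integral_mono_ae hint1 hIntJB hpt
    rw [← hJ] at hmono
    have h5 : (fun y => Real.exp m₀ * (1 + γ' * w y - m₀))
        = (fun y => Real.exp m₀ * (1 - m₀) + (Real.exp m₀ * γ') * w y) := by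
      funext y; ring
    have hLHS : (∫ y in B, Real.exp m₀ * (1 + γ' * w y - m₀) ∂μ)
        = Real.exp m₀ * ((1 - m₀) * q' + γ' * I) := by
      rw [h5, integral_add (integrable_const _) (hIntB.const_mul _), setIntegral_const,
        integral_const_mul, ← hI, smul_eq_mul]
      rw [hq', measureReal_def]
      ring
    linarith [hmono, hLHS.symm.le, hLHS.le]
  have hA2 : β * (Real.exp m₀ * (1 - m₀)) ≤ β := by
    have h1 := Real.add_one_le_exp (-m₀)
    have h2 : Real.exp (-m₀) = (Real.exp m₀)⁻¹ := Real.exp_neg m₀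
    have h3 := Real.exp_pos m₀
    have h4 : Real.exp m₀ * (1 - m₀) ≤ 1 := by
      rw [h2] at h1
      have := mul_le_mul_of_nonneg_left h1 (le_of_lt h3)
      rw [mul_inv_cancel₀ (ne_of_gt h3)] at this
      nlinarith
    nlinarith
  have hmass : θ⁻¹ * q' + β = 1 := by
    rw [hβ]
    field_simp
    ring
  have hθγ : θ⁻¹ * γ' = 2*γ := by
    rw [hθ, inv_div]
    field_simp
  have hθinv0 : (0:ℝ) ≤ θ⁻¹ := by positivity
  have hθγI : θ⁻¹ * (γ' * I) = m₀ := by rw [hm₀, ← hθγ]; ring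
  have hkey : Real.exp m₀ ≤ β + θ⁻¹ * J := by
    have hA1' := mul_le_mul_of_nonneg_left hA1 hθinv0
    have hsum := add_le_add hA1' hA2
    have hexpand : θ⁻¹ * (Real.exp m₀ * ((1 - m₀) * q' + γ' * I))
        + β * (Real.exp m₀ * (1 - m₀))
        = Real.exp m₀ * ((1 - m₀) * (θ⁻¹ * q' + β) + θ⁻¹ * (γ' * I)) := by ring
    rw [hexpand, hmass, hθγI] at hsum
    have : Real.exp m₀ * ((1 - m₀) * 1 + m₀) = Real.exp m₀ := by ring
    rw [this] at hsum
    linarith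
  -- ENNReal endgame
  have hofReal : eexp (ENNReal.ofReal (2*γ) * M) ≤ 1 + ENNReal.ofReal (2*γ/γ') * Ψ := by
    rw [hMI, ← ENNReal.ofReal_mul (le_of_lt hg0'), eexp_ofReal (by positivity)]
    calc ENNReal.ofReal (Real.exp (2*γ*I)) ≤ ENNReal.ofReal (β + θ⁻¹ * J) := by
          apply ENNReal.ofReal_le_ofReal
          exact hkey
    _ ≤ ENNReal.ofReal β + ENNReal.ofReal (θ⁻¹ * J) := ENNReal.ofReal_add_le
    _ ≤ 1 + ENNReal.ofReal (2*γ/γ') * Ψ := by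
        apply add_le_add
        · exact ENNReal.ofReal_le_one.mpr hβ1
        · rw [ENNReal.ofReal_mul hθinv0]
          have hθinv : θ⁻¹ = 2*γ/γ' := by rw [hθ, inv_div]
          rw [hθinv]
          apply mul_le_mul_right
          rw [← hJof]
          exact lintegral_mono' Measure.restrict_le_self (le_refl _)
  calc eexp (ENNReal.ofReal (2*γ) * Φ)
      ≤ eexp (ENNReal.ofReal (2*γ) * (M + ENNReal.ofReal (Real.log (2/δ)))) :=
        eexp_mono (mul_le_mul_right hstepa _)
  _ = eexp (ENNReal.ofReal (2*γ) * M)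
      * eexp (ENNReal.ofReal (2*γ) * ENNReal.ofReal (Real.log (2/δ))) := by
        rw [mul_add, eexp_add]
  _ ≤ (1 + ENNReal.ofReal (2*γ/γ') * Ψ) * ENNReal.ofReal ((2/δ) ^ (2*γ)) := by
        apply mul_le_mul' hofReal
        rw [← ENNReal.ofReal_mul (le_of_lt hg0'), eexp_ofReal (by positivity)]
        apply le_of_eq
        congr 1
        rw [Real.rpow_def_of_pos (by positivity : (0:ℝ) < 2/δ)]
        congr 1
        ring
  _ = ENNReal.ofReal ((2/δ) ^ (2*γ)) * (1 + ENNReal.ofReal (2*γ/γ') * Ψ) := mul_comm _ _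

end Chain

lemma young_pt {a t : ℝ≥0∞} (ha : a ≠ ⊤) :
    a * t ≤ ENNReal.ofReal (a.toReal * Real.log a.toReal) + eexp t := by
  rcases eq_or_ne t ⊤ with ht | ht
  · rw [ht, eexp, if_pos rfl, add_top]; exact le_top
  set α := a.toReal with hα
  set τ := t.toReal with hτ
  have hα0 : 0 ≤ α := ENNReal.toReal_nonneg
  have hτ0 : 0 ≤ τ := ENNReal.toReal_nonneg
  have ha' : a = ENNReal.ofReal α := (ENNReal.ofReal_toReal ha).symm
  have ht' : t = ENNReal.ofReal τ := (ENNReal.ofReal_toReal ht).symm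
  rw [ha', ht', eexp_ofReal hτ0, ← ENNReal.ofReal_mul hα0]
  rcases le_or_gt α 1 with h1 | h1
  · have hstep : ENNReal.ofReal (α * τ) ≤ ENNReal.ofReal (Real.exp τ) := by
      apply ENNReal.ofReal_le_ofReal
      have := Real.add_one_le_exp τ
      nlinarith
    exact hstep.trans le_add_self
  · have hyoung : α * τ ≤ α * Real.log α + Real.exp τ := by
      have h2 := Real.add_one_le_exp (τ - Real.log α)
      have h3 : Real.exp (τ - Real.log α) = Real.exp τ / α := by
        rw [Real.exp_sub, Real.exp_log (by linarith)]
      rw [h3] at h2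
      have h4 : α * (τ - Real.log α + 1) ≤ Real.exp τ := by
        rw [div_eq_mul_inv] at h2
        have := mul_le_mul_of_nonneg_left h2 (by linarith : (0:ℝ) ≤ α)
        rw [← mul_assoc, mul_comm α (Real.exp τ), mul_assoc,
          mul_inv_cancel₀ (by linarith : α ≠ 0), mul_one] at this
        linarith
      nlinarith
    exact (ENNReal.ofReal_le_ofReal hyoung).trans ENNReal.ofReal_add_le

lemma mul_log_ge (a : ℝ) (ha : 0 ≤ a) : a - 1 ≤ a * Real.log a := by
  rcases eq_or_lt_of_le ha with h0 | h0
  · rw [← h0]; norm_num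
  · have h1 := Real.log_le_sub_one_of_pos (show (0:ℝ) < a⁻¹ by positivity)
    rw [Real.log_inv] at h1
    have h2 : -Real.log a ≤ a⁻¹ - 1 := h1
    have := mul_le_mul_of_nonneg_left h2 (le_of_lt h0)
    rw [mul_sub, mul_inv_cancel₀ (ne_of_gt h0)] at this
    nlinarith


/-- **Strengthened logarithmic Hardy–Littlewood–Sobolev inequality on the two-sphere.**
Let `σ` be the (unique) rotation-invariant Borel probability measure on the unit sphere
`S² ⊂ ℝ³`. For each `γ ∈ (0,2)` there is a constant `C_γ` such that every Borel probability
measure `μ` on `S²` with vanishing barycenter `∫ x dμ = 0` satisfies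
`2γ ∬ log(1/|x-y|) dμ dμ ≤ D(μ‖σ) + C_γ`. (Stated in `ℝ≥0∞` by shifting the kernel to the
nonnegative kernel `log 2 - log |x-y|`, which transfers the constant to `2γ log 2 + C`.) -/
theorem strengthened_log_HLS
    (σ : Measure E3) (hσ1 : IsProbabilityMeasure σ)
    (hσs : σ (Metric.sphere (0 : E3) 1) = 1)
    (hσinv : ∀ R : E3 ≃ₗᵢ[ℝ] E3, σ.map R = σ)
    (γ : ℝ) (hγ0 : 0 < γ) (hγ2 : γ < 2) :
    ∃ C : ℝ, ∀ μ : Measure E3, IsProbabilityMeasure μ →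
      μ (Metric.sphere (0 : E3) 1) = 1 → (∫ x, x ∂μ) = 0 →
      ENNReal.ofReal (2 * γ) *
          (∫⁻ p : E3 × E3,
            ENNReal.ofReal (Real.log 2 - Real.log (dist p.1 p.2)) ∂(μ.prod μ)) ≤
        relEnt μ σ + ENNReal.ofReal (2 * γ * Real.log 2 + C) := by
  -- parameters
  set γ' : ℝ := 1 + γ/2 with hγ'
  have hg1 : 1 < γ' := by rw [hγ']; linarith
  have hg2 : γ' < 2 := by rw [hγ']; linarith
  set θ : ℝ := γ' / (2*γ) with hθ
  have hθhalf : 1/2 < θ := by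
    rw [hθ, hγ', lt_div_iff₀ (by linarith : (0:ℝ) < 2*γ)]
    linarith
  have hθpos : 0 < θ := lt_trans (by norm_num) hθhalf
  have hθ2 : 1/θ < 2 := by
    rw [div_lt_iff₀ hθpos]; linarith
  set δ : ℝ := min 1 (Real.sqrt (2 - 1/θ)) with hδ
  have hδ0 : 0 < δ := lt_min one_pos (Real.sqrt_pos.mpr (by linarith))
  have hδ1 : δ ≤ 1 := min_le_left _ _
  have hδcap : 1 / (2 - δ^2/2) ≤ θ := by
    have h1 : δ^2 ≤ 2 - 1/θ := by
      have h2 : δ ≤ Real.sqrt (2 - 1/θ) := min_le_right _ _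
      have h3 : 0 ≤ (2:ℝ) - 1/θ := by linarith
      nlinarith [Real.sq_sqrt h3, Real.sqrt_nonneg (2 - 1/θ)]
    have h4 : 1/θ ≤ 2 - δ^2/2 := by
      have h5 : 0 < 1/θ := by positivity
      nlinarith
    rw [div_le_iff₀ (by nlinarith : (0:ℝ) < 2 - δ^2/2)]
    have := mul_le_mul_of_nonneg_left h4 (le_of_lt hθpos)
    rw [mul_one_div, div_self (ne_of_gt hθpos)] at this
    linarith
  -- kernel bound
  have hball := fun p hp r hr => sigma_ball_le σ hσ1 hσinv (p := p) hp (r := r) hr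
  have hsing : ∀ p : E3, ‖p‖ = 1 → σ {p} = 0 :=
    fun p hp => sigma_singleton_null σ hσ1 hσinv hball hp
  obtain ⟨C', hC'top, hC'⟩ := kernel_bound σ hσ1 hσs hball hsing hg1 hg2
  -- the master constant
  set K : ℝ≥0∞ := ENNReal.ofReal ((2/δ) ^ (2*γ)) * (1 + ENNReal.ofReal (2*γ/γ') * C') with hK
  have hKtop : K ≠ ⊤ := by
    rw [hK]
    apply ENNReal.mul_ne_top ENNReal.ofReal_ne_top
    apply ENNReal.add_ne_top.mpr
    exact ⟨ENNReal.one_ne_top, ENNReal.mul_ne_top ENNReal.ofReal_ne_top hC'top⟩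
  refine ⟨1 + K.toReal, ?_⟩
  intro μ hμ1 hμs hbc
  haveI := hμ1
  haveI : μ.HaveLebesgueDecomposition σ := Measure.haveLebesgueDecomposition_of_finiteMeasure
  by_cases hc : μ ≪ σ ∧ Integrable (fun x => Real.log (μ.rnDeriv σ x).toReal) μ
  swap
  · rw [relEnt, if_neg hc, top_add]
    exact le_top
  obtain ⟨hac, hint⟩ := hc
  rw [relEnt, if_pos ⟨hac, hint⟩]
  set f : E3 → ℝ≥0∞ := μ.rnDeriv σ with hf
  have hfm : Measurable f := Measure.measurable_rnDeriv μ σ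
  -- measurability of the kernels
  have hWm : Measurable (fun p : E3 × E3 => ENNReal.ofReal (Real.log 2 - Real.log (dist p.1 p.2))) := by
    apply Measurable.ennreal_ofReal
    exact measurable_const.sub (Real.measurable_log.comp (measurable_fst.dist measurable_snd))
  have hΦm : Measurable (fun x : E3 => ∫⁻ y, ENNReal.ofReal (Real.log 2 - Real.log (dist x y)) ∂μ) :=
    Measurable.lintegral_prod_right hWm
  have hRm : Measurable (fun p : E3 × E3 => ENNReal.ofReal ((2 / dist p.1 p.2) ^ γ')) := by
    apply Measurable.ennreal_ofReal
    apply Measurable.pow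
    · exact measurable_const.div (measurable_fst.dist measurable_snd)
    · exact measurable_const
  have hΨm : Measurable (fun x : E3 => ∫⁻ y, ENNReal.ofReal ((2 / dist x y) ^ γ') ∂μ) :=
    Measurable.lintegral_prod_right hRm
  set Φ : E3 → ℝ≥0∞ := fun x => ∫⁻ y, ENNReal.ofReal (Real.log 2 - Real.log (dist x y)) ∂μ with hΦ
  set G : E3 → ℝ≥0∞ := fun x => ENNReal.ofReal (2*γ) * Φ x with hG
  have hGm : Measurable G := measurable_const.mul hΦm
  -- LHS rewriting
  have hLHS : ENNReal.ofReal (2 * γ) *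
      (∫⁻ p : E3 × E3, ENNReal.ofReal (Real.log 2 - Real.log (dist p.1 p.2)) ∂(μ.prod μ))
      = ∫⁻ x, G x ∂μ := by
    rw [lintegral_prod _ hWm.aemeasurable]
    rw [hG]
    rw [← lintegral_const_mul _ hΦm]
  rw [hLHS]
  -- change of measure to σ
  have hμσ : ∫⁻ x, G x ∂μ = ∫⁻ x, f x * G x ∂σ := by
    conv_lhs => rw [← Measure.withDensity_rnDeriv_eq μ σ hac]
    rw [lintegral_withDensity_eq_lintegral_mul σ hfm hGm]
    rfl
  rw [hμσ]
  -- pointwise Young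
  set L : E3 → ℝ := fun x => (f x).toReal * Real.log (f x).toReal with hL
  have hLm : Measurable (fun x => ENNReal.ofReal (L x)) := by
    apply Measurable.ennreal_ofReal
    exact (hfm.ennreal_toReal).mul (Real.measurable_log.comp hfm.ennreal_toReal)
  have hyoung : ∀ᵐ x ∂σ, f x * G x ≤ ENNReal.ofReal (L x) + eexp (G x) := by
    filter_upwards [Measure.rnDeriv_lt_top μ σ] with x hx
    exact young_pt (ne_of_lt hx)
  have hsplit : ∫⁻ x, f x * G x ∂σ ≤ (∫⁻ x, ENNReal.ofReal (L x) ∂σ) + ∫⁻ x, eexp (G x) ∂σ := by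
    calc ∫⁻ x, f x * G x ∂σ ≤ ∫⁻ x, (ENNReal.ofReal (L x) + eexp (G x)) ∂σ :=
          lintegral_mono_ae hyoung
    _ = _ := lintegral_add_left hLm _
  refine le_trans hsplit ?_
  -- entropy part
  have hLint : Integrable L σ := by
    have := (integrable_rnDeriv_smul_iff hac
      (f := fun x => Real.log (μ.rnDeriv σ x).toReal)).mpr hint
    simpa [hL, smul_eq_mul] using this
  have hchg : ∫ x, L x ∂σ = ∫ x, Real.log (μ.rnDeriv σ x).toReal ∂μ := by
    have := integral_rnDeriv_smul hac (f := fun x => Real.log (μ.rnDeriv σ x).toReal)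
    simpa [hL, smul_eq_mul] using this
  have hent : ∫⁻ x, ENNReal.ofReal (L x) ∂σ ≤
      ENNReal.ofReal (∫ x, Real.log (μ.rnDeriv σ x).toReal ∂μ) + 1 := by
    have h1 : ∀ x, ENNReal.ofReal (L x) ≤ ENNReal.ofReal (L x + 1) :=
      fun x => ENNReal.ofReal_le_ofReal (by linarith)
    have h2 : ∀ᵐ x ∂σ, 0 ≤ L x + 1 := by
      filter_upwards [] with x
      have := mul_log_ge (f x).toReal ENNReal.toReal_nonneg
      have h3 : (0:ℝ) ≤ (f x).toReal := ENNReal.toReal_nonneg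
      rw [hL]; simp only []
      linarith
    calc ∫⁻ x, ENNReal.ofReal (L x) ∂σ ≤ ∫⁻ x, ENNReal.ofReal (L x + 1) ∂σ :=
          lintegral_mono h1
    _ = ENNReal.ofReal (∫ x, (L x + 1) ∂σ) :=
          (ofReal_integral_eq_lintegral_ofReal (hLint.add (integrable_const 1)) h2).symm
    _ = ENNReal.ofReal ((∫ x, L x ∂σ) + 1) := by
          rw [integral_add hLint (integrable_const 1), integral_const, probReal_univ]
          norm_num
    _ ≤ ENNReal.ofReal (∫ x, L x ∂σ) + ENNReal.ofReal 1 := ENNReal.ofReal_add_le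
    _ = ENNReal.ofReal (∫ x, Real.log (μ.rnDeriv σ x).toReal ∂μ) + 1 := by
          rw [hchg, ENNReal.ofReal_one]
  -- exponential part
  have hexp : ∫⁻ x, eexp (G x) ∂σ ≤ K := by
    have haeSσ := ae_norm_one σ hσs hσ1
    have hchain : ∀ᵐ x ∂σ, eexp (G x) ≤ ENNReal.ofReal ((2/δ) ^ (2*γ)) *
        (1 + ENNReal.ofReal (2*γ/γ') * ∫⁻ y, ENNReal.ofReal ((2 / dist x y) ^ γ') ∂μ) := by
      filter_upwards [haeSσ] with x hx
      have hxnull : μ {x} = 0 := hac (hsing x hx)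
      have hcap : (μ (Metric.ball x δ)).toReal ≤ γ' / (2*γ) := by
        refine le_trans (concentration μ hμ1 hμs hbc hx hδ0 hδ1) ?_
        rw [← hθ]
        exact hδcap
      exact chain μ hμs hx hxnull hγ0 hg1 hg2 hδ0 hδ1 hcap
    calc ∫⁻ x, eexp (G x) ∂σ
        ≤ ∫⁻ x, ENNReal.ofReal ((2/δ) ^ (2*γ)) *
          (1 + ENNReal.ofReal (2*γ/γ') * ∫⁻ y, ENNReal.ofReal ((2 / dist x y) ^ γ') ∂μ) ∂σ :=
          lintegral_mono_ae hchain
    _ = ENNReal.ofReal ((2/δ) ^ (2*γ)) *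
          (1 + ENNReal.ofReal (2*γ/γ') * ∫⁻ x, (∫⁻ y, ENNReal.ofReal ((2 / dist x y) ^ γ') ∂μ) ∂σ) := by
          rw [lintegral_const_mul _ (f := fun x => 1 + ENNReal.ofReal (2*γ/γ') * ∫⁻ y, ENNReal.ofReal ((2 / dist x y) ^ γ') ∂μ) (measurable_const.add (measurable_const.mul hΨm))]
          congr 1
          rw [lintegral_add_left measurable_const, lintegral_const, measure_univ, mul_one,
            lintegral_const_mul _ hΨm]
    _ ≤ K := by
          rw [hK]
          apply mul_le_mul_right
          apply add_le_add_right
          apply mul_le_mul_right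
          -- Tonelli + uniform bound
          have hswap : (∫⁻ x, (∫⁻ y, ENNReal.ofReal ((2 / dist x y) ^ γ') ∂μ) ∂σ)
              = ∫⁻ y, (∫⁻ x, ENNReal.ofReal ((2 / dist x y) ^ γ') ∂σ) ∂μ :=
            lintegral_lintegral_swap hRm.aemeasurable
          rw [hswap]
          have haeSμ := ae_norm_one μ hμs hμ1
          calc (∫⁻ y, (∫⁻ x, ENNReal.ofReal ((2 / dist x y) ^ γ') ∂σ) ∂μ)
              ≤ ∫⁻ _, C' ∂μ := by
                apply lintegral_mono_ae
                filter_upwards [haeSμ] with y hy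
                exact hC' y hy
          _ = C' := by rw [lintegral_const, measure_univ, mul_one]
  -- final arithmetic
  calc (∫⁻ x, ENNReal.ofReal (L x) ∂σ) + ∫⁻ x, eexp (G x) ∂σ
      ≤ (ENNReal.ofReal (∫ x, Real.log (μ.rnDeriv σ x).toReal ∂μ) + 1) + K :=
        add_le_add hent hexp
  _ ≤ ENNReal.ofReal (∫ x, Real.log (μ.rnDeriv σ x).toReal ∂μ)
      + ENNReal.ofReal (2 * γ * Real.log 2 + (1 + K.toReal)) := by
        rw [add_assoc]
        apply add_le_add_right
        have hKof : K = ENNReal.ofReal K.toReal := (ENNReal.ofReal_toReal hKtop).symm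
        calc (1:ℝ≥0∞) + K = ENNReal.ofReal 1 + ENNReal.ofReal K.toReal := by
              rw [← hKof, ENNReal.ofReal_one]
        _ = ENNReal.ofReal (1 + K.toReal) := by
              rw [ENNReal.ofReal_add (by norm_num) ENNReal.toReal_nonneg]
        _ ≤ ENNReal.ofReal (2 * γ * Real.log 2 + (1 + K.toReal)) := by
              apply ENNReal.ofReal_le_ofReal
              have : 0 ≤ 2 * γ * Real.log 2 := by
                have := Real.log_nonneg (by norm_num : (1:ℝ) ≤ 2)
                positivity
              linarith
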